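/- Under the identification of A = F_2[X_1,...,X_m]/(X_1^2-1,...,X_m^2-1) with F_2^{2^m} via coefficients of the monomials x_1^{i_1}···x_m^{i_m}, the radical power M^l equals the (m-l)-th order binary Reed-Muller code C_{m-l}(m,2) of length 2^m, for every 0 ≤ l ≤ m. (Berman's theorem) -/

import Mathlib

set_option synthInstance.maxHeartbeats 1000000
set_option maxHeartbeats 1000000

open MvPolynomial
open Finset

noncomputable def gI (m : ℕ) (I : Finset (Fin m)) : MvPolynomial (Fin m) (ZMod 2) :=
  ∏ i ∈ I, (X i - 1)

noncomputable def XI (m : ℕ) (I : Finset (Fin m)) : MvPolynomial (Fin m) (ZMod 2) :=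
  ∏ i ∈ I, X i

/-- The ideal (X₁²-1, …, Xₘ²-1). -/
noncomputable def relIdeal (m : ℕ) : Ideal (MvPolynomial (Fin m) (ZMod 2)) :=
  Ideal.span {p | ∃ i : Fin m, p = X i ^ 2 - 1}

/-- The ambient algebra A = F₂[X₁,…,Xₘ]/(X₁²-1,…,Xₘ²-1). -/
abbrev Amb (m : ℕ) := MvPolynomial (Fin m) (ZMod 2) ⧸ relIdeal m

/-- The ideal M of A generated by the images of the Xᵢ - 1. -/
noncomputable def Mideal (m : ℕ) : Ideal (Amb m) :=
  Ideal.span {a | ∃ i : Fin m, a = Ideal.Quotient.mk (relIdeal m) (X i - 1)}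

/-- The identification F₂^{2^m} → A sending a coefficient vector (indexed by the subsets
S ⊆ {1,…,m}, i.e. by the squarefree monomials x_S) to the corresponding element of A. -/
noncomputable def toA (m : ℕ) (w : Finset (Fin m) → ZMod 2) : Amb m :=
  Ideal.Quotient.mk (relIdeal m) (∑ S : Finset (Fin m), w S • XI m S)

/-- The ν-th order binary Reed-Muller code of length 2^m: evaluation vectors over all
points of F₂^m (the point attached to S ⊆ {1,…,m} is its indicator vector) of reduced
polynomials of total degree at most ν. -/
def RM (m ν : ℕ) : Set (Finset (Fin m) → ZMod 2) :=
  {w | ∃ P : MvPolynomial (Fin m) (ZMod 2),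
    P.totalDegree ≤ ν ∧ (∀ α ∈ P.support, ∀ i, α i ≤ 1) ∧
    ∀ S : Finset (Fin m),
      w S = eval (fun i => if i ∈ S then (1 : ZMod 2) else 0) P}



lemma card_between {X : Type*} [DecidableEq X] (R Q : Finset X) (h : R ⊆ Q) :
    ((Q.powerset).filter (fun U => R ⊆ U)).card = 2 ^ ((Q \ R).card) := by
  rw [← Finset.card_powerset]
  apply Finset.card_bij (fun U _ => U \ R)
  · intro U hU
    simp only [mem_filter, mem_powerset] at hU
    simp only [mem_powerset]
    exact sdiff_subset_sdiff hU.1 Subset.rfl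
  · intro U hU V hV hUV
    simp only [mem_filter, mem_powerset] at hU hV
    have : U \ R ∪ R = V \ R ∪ R := by rw [hUV]
    rwa [sdiff_union_of_subset hU.2, sdiff_union_of_subset hV.2] at this
  · intro V hV
    simp only [mem_powerset] at hV
    have hdisj : Disjoint V R := disjoint_of_subset_left hV sdiff_disjoint
    refine ⟨V ∪ R, ?_, ?_⟩
    · simp only [mem_filter, mem_powerset]
      exact ⟨union_subset (hV.trans (sdiff_subset)) h, subset_union_right⟩
    · rw [union_sdiff_right, sdiff_eq_self_of_disjoint hdisj]

lemma two_pow_zmod (k : ℕ) : ((2 ^ k : ℕ) : ZMod 2) = if k = 0 then 1 else 0 := by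
  cases k with
  | zero => simp
  | succ n => push_cast; rw [pow_succ]; simp [show ((2:ZMod 2))=0 from rfl]

lemma count_between_zmod {m : ℕ} (U S : Finset (Fin m)) :
    (((Finset.univ : Finset (Finset (Fin m))).filter (fun T => U ⊆ T ∧ T ⊆ S)).card : ZMod 2)
      = if S = U then 1 else 0 := by
  by_cases h : U ⊆ S
  · have he : (Finset.univ : Finset (Finset (Fin m))).filter (fun T => U ⊆ T ∧ T ⊆ S)
        = (S.powerset).filter (fun T => U ⊆ T) := by
      ext T; simp [and_comm]
    rw [he, card_between U S h, two_pow_zmod]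
    have : #(S \ U) = 0 ↔ S = U := by
      rw [card_eq_zero, sdiff_eq_empty_iff_subset]
      exact ⟨fun h2 => Subset.antisymm h2 h, fun h2 => h2 ▸ Subset.rfl⟩
    simp [this]
  · have he : (Finset.univ : Finset (Finset (Fin m))).filter (fun T => U ⊆ T ∧ T ⊆ S)
        = ∅ := by
      ext T; simp only [mem_filter, Finset.mem_univ, true_and, Finset.notMem_empty, iff_false]
      rintro ⟨h1, h2⟩; exact h (h1.trans h2)
    rw [he]
    have : S ≠ U := fun hSU => h (hSU ▸ Subset.rfl)
    simp [this]

lemma count_superset_zmod {m : ℕ} (T : Finset (Fin m)) :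
    (((Finset.univ : Finset (Finset (Fin m))).filter (fun S => T ⊆ S)).card : ZMod 2)
      = if T = Finset.univ then 1 else 0 := by
  have := count_between_zmod T (Finset.univ : Finset (Fin m))
  simp only [subset_univ, and_true] at this
  rw [this]
  by_cases h : T = Finset.univ <;> simp [h, eq_comm]

/-- The superset-sum transform. -/
noncomputable def Dop (m : ℕ) (w : Finset (Fin m) → ZMod 2) : Finset (Fin m) → ZMod 2 :=
  fun T => ∑ S ∈ Finset.univ.filter (fun S => T ⊆ S), w S

lemma Dop_Dop {m : ℕ} (w : Finset (Fin m) → ZMod 2) : Dop m (Dop m w) = w := by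
  funext U
  simp only [Dop]
  calc ∑ T ∈ Finset.univ.filter (fun T => U ⊆ T), ∑ S ∈ Finset.univ.filter (fun S => T ⊆ S), w S
      = ∑ T : Finset (Fin m), ∑ S : Finset (Fin m),
          (if U ⊆ T ∧ T ⊆ S then (1 : ZMod 2) else 0) * w S := by
        rw [sum_filter]
        refine sum_congr rfl fun T _ => ?_
        by_cases hUT : U ⊆ T
        · rw [if_pos hUT, sum_filter]
          refine sum_congr rfl fun S _ => ?_
          by_cases hTS : T ⊆ S <;> simp [hUT, hTS]
        · rw [if_neg hUT]
          refine (sum_eq_zero fun S _ => ?_).symm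
          simp [hUT]
    _ = ∑ S : Finset (Fin m),
          ((Finset.univ.filter (fun T => U ⊆ T ∧ T ⊆ S)).card : ZMod 2) * w S := by
        rw [Finset.sum_comm]
        refine sum_congr rfl fun S _ => ?_
        rw [← Finset.sum_mul]
        congr 1
        rw [Finset.sum_boole]
    _ = w U := by
        simp only [count_between_zmod]
        rw [Finset.sum_eq_single U (fun S _ hS => by simp [hS]) (by simp)]
        simp


-- In char 2, X i - 1 = X i + 1
lemma neg_one_poly (m : ℕ) : (-1 : MvPolynomial (Fin m) (ZMod 2)) = 1 := by
  have h2 : (2 : MvPolynomial (Fin m) (ZMod 2)) = 0 := by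
    have : (2 : MvPolynomial (Fin m) (ZMod 2)) = C (2 : ZMod 2) := by
      rw [show (2:ZMod 2) = 1 + 1 from rfl, map_add, map_one]; norm_num
    rw [this, show ((2:ZMod 2)) = 0 from rfl, map_zero]
  linear_combination -h2

lemma X_sub_one (m : ℕ) (i : Fin m) :
    (X i - 1 : MvPolynomial (Fin m) (ZMod 2)) = X i + 1 := by
  rw [sub_eq_add_neg, neg_one_poly]

-- gI as a sum of squarefree monomials
lemma gI_eq_sum (m : ℕ) (T : Finset (Fin m)) :
    gI m T = ∑ U ∈ T.powerset, XI m U := by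
  unfold gI XI
  calc ∏ i ∈ T, (X i - 1 : MvPolynomial (Fin m) (ZMod 2))
      = ∏ i ∈ T, (X i + 1) := by
        exact Finset.prod_congr rfl fun i _ => X_sub_one m i
    _ = ∑ U ∈ T.powerset, (∏ i ∈ U, X i) * ∏ i ∈ T \ U, 1 := Finset.prod_add _ _ T
    _ = ∑ U ∈ T.powerset, ∏ i ∈ U, X i := by
        refine Finset.sum_congr rfl fun U _ => by rw [Finset.prod_const_one, mul_one]

-- swap lemma: sum over T of c T • gI T equals sum over U of (Dop c U) • XI U
lemma sum_gI_eq (m : ℕ) (c : Finset (Fin m) → ZMod 2) :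
    ∑ T : Finset (Fin m), c T • gI m T
      = ∑ U : Finset (Fin m), (Dop m c U) • XI m U := by
  calc ∑ T : Finset (Fin m), c T • gI m T
      = ∑ T : Finset (Fin m), ∑ U : Finset (Fin m),
          (if U ⊆ T then c T • XI m U else 0) := by
        refine Finset.sum_congr rfl fun T _ => ?_
        rw [gI_eq_sum, Finset.smul_sum, ← Finset.sum_filter]
        congr 1
        ext U
        simp [Finset.mem_powerset]
    _ = ∑ U : Finset (Fin m), (Dop m c U) • XI m U := by
        rw [Finset.sum_comm]
        refine Finset.sum_congr rfl fun U _ => ?_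
        rw [Dop, Finset.sum_smul, Finset.sum_filter]

-- ### Independence via the group algebra
abbrev GA (m : ℕ) := AddMonoidAlgebra (ZMod 2) (Fin m → ZMod 2)

/-- indicator vector of a subset -/
def ind {m : ℕ} (S : Finset (Fin m)) : Fin m → ZMod 2 :=
  fun i => if i ∈ S then 1 else 0

lemma ind_injective {m : ℕ} : Function.Injective (ind (m := m)) := by
  intro S T h
  ext i
  have := congrFun h i
  by_cases hS : i ∈ S <;> by_cases hT : i ∈ T <;> simp [ind, hS, hT] at this ⊢

noncomputable def phiPoly (m : ℕ) : MvPolynomial (Fin m) (ZMod 2) →ₐ[ZMod 2] GA m :=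
  MvPolynomial.aeval (fun i => AddMonoidAlgebra.single (ind {i}) 1)

lemma phiPoly_XI (m : ℕ) (S : Finset (Fin m)) :
    phiPoly m (XI m S) = AddMonoidAlgebra.single (ind S) 1 := by
  unfold phiPoly XI
  rw [map_prod]
  simp only [MvPolynomial.aeval_X]
  rw [AddMonoidAlgebra.prod_single]
  congr 1
  · funext j
    rw [Finset.sum_apply]
    simp only [ind]
    by_cases hj : j ∈ S
    · rw [Finset.sum_eq_single j (fun i _ hij => by simp [Ne.symm hij]) (by simp [hj])]
      simp [hj]
    · rw [if_neg hj]
      exact Finset.sum_eq_zero fun i hi => by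
        simp only [Finset.mem_singleton]
        rw [if_neg]
        intro h; exact hj (h ▸ hi)
  · rw [Finset.prod_const_one]

lemma phiPoly_rel (m : ℕ) : relIdeal m ≤ RingHom.ker (phiPoly m) := by
  rw [relIdeal, Ideal.span_le]
  rintro p ⟨i, rfl⟩
  simp only [SetLike.mem_coe, RingHom.mem_ker, map_sub, map_one, map_pow]
  rw [show phiPoly m (X i) = AddMonoidAlgebra.single (ind {i}) 1 from MvPolynomial.aeval_X _ _]
  rw [sq, AddMonoidAlgebra.single_mul_single]
  have : ind ({i} : Finset (Fin m)) + ind {i} = 0 := by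
    funext j; simp [ind]; split <;> rfl
  rw [this, mul_one, AddMonoidAlgebra.one_def, sub_self]

noncomputable def phiA (m : ℕ) : Amb m →ₐ[ZMod 2] GA m :=
  Ideal.Quotient.liftₐ (relIdeal m) (phiPoly m) (fun a ha => RingHom.mem_ker.1 (phiPoly_rel m ha))

lemma phiA_toA (m : ℕ) (w : Finset (Fin m) → ZMod 2) :
    phiA m (toA m w) = ∑ S : Finset (Fin m), AddMonoidAlgebra.single (ind S) (w S) := by
  unfold toA phiA
  show phiPoly m (∑ S : Finset (Fin m), w S • XI m S) = _
  rw [map_sum]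
  refine Finset.sum_congr rfl fun S _ => ?_
  show (phiPoly m) (w S • XI m S) = _
  rw [map_smul, phiPoly_XI, AddMonoidAlgebra.smul_single, smul_eq_mul, mul_one]

lemma toA_injective (m : ℕ) : Function.Injective (toA m) := by
  intro v w h
  have h2 := congrArg (phiA m) h
  rw [phiA_toA, phiA_toA] at h2
  funext S
  classical
  have key : ∀ (u : Finset (Fin m) → ZMod 2) (S : Finset (Fin m)),
      (∑ T : Finset (Fin m), AddMonoidAlgebra.single (ind T) (u T)).coeff (ind S) = u S := by
    intro u S
    rw [AddMonoidAlgebra.coeff_sum, Finsupp.finset_sum_apply]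
    rw [Finset.sum_eq_single S (fun T _ hT => ?_) (by simp)]
    · simp [AddMonoidAlgebra.coeff_single, Finsupp.single_apply]
    · rw [AddMonoidAlgebra.coeff_single, Finsupp.single_apply, if_neg (fun hh => hT (ind_injective hh))]
  rw [← key v S, ← key w S, h2]

-- ### Ideal machinery
noncomputable def QA (m : ℕ) : MvPolynomial (Fin m) (ZMod 2) →ₐ[ZMod 2] Amb m :=
  Ideal.Quotient.mkₐ (ZMod 2) (relIdeal m)

noncomputable def Gmap (m : ℕ) (c : Finset (Fin m) → ZMod 2) : Amb m :=
  QA m (∑ T : Finset (Fin m), c T • gI m T)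

lemma Gmap_eq_toA (m : ℕ) (c : Finset (Fin m) → ZMod 2) :
    Gmap m c = toA m (Dop m c) := by
  unfold Gmap toA
  rw [sum_gI_eq]
  rfl

lemma toA_eq_Gmap (m : ℕ) (w : Finset (Fin m) → ZMod 2) :
    toA m w = Gmap m (Dop m w) := by
  rw [Gmap_eq_toA, Dop_Dop]

lemma two_poly (m : ℕ) : (2 : MvPolynomial (Fin m) (ZMod 2)) = 0 := by
  have := neg_one_poly m
  linear_combination -this

lemma sq_gen (m : ℕ) (i : Fin m) :
    ((X i - 1 : MvPolynomial (Fin m) (ZMod 2)))^2 = X i ^ 2 - 1 := by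
  have := two_poly m
  ring_nf
  linear_combination (-(X i : MvPolynomial (Fin m) (ZMod 2)) + 1) * this

lemma QA_sq_gen (m : ℕ) (i : Fin m) : QA m ((X i - 1)^2) = 0 := by
  rw [sq_gen]
  have : (X i ^ 2 - 1 : MvPolynomial (Fin m) (ZMod 2)) ∈ relIdeal m :=
    Ideal.subset_span ⟨i, rfl⟩
  rwa [show QA m (X i ^ 2 - 1) = Ideal.Quotient.mk (relIdeal m) (X i ^2 - 1) from rfl,
    Ideal.Quotient.eq_zero_iff_mem]

lemma QA_gen_mem (m : ℕ) (i : Fin m) : QA m (X i - 1) ∈ Mideal m :=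
  Ideal.subset_span ⟨i, rfl⟩

lemma QA_gI_mem_pow (m : ℕ) (T : Finset (Fin m)) :
    QA m (gI m T) ∈ Mideal m ^ T.card := by
  classical
  induction T using Finset.induction with
  | empty => simp [gI]
  | @insert i T hi ih =>
    rw [Finset.card_insert_of_notMem hi, gI, Finset.prod_insert hi, map_mul, Ideal.IsTwoSided.pow_succ]
    exact Ideal.mul_mem_mul (QA_gen_mem m i) ih

-- multiplication of gI by a generator
lemma gI_mul_gen (m : ℕ) (T : Finset (Fin m)) (i : Fin m) :
    QA m (gI m T) * QA m (X i - 1)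
      = if i ∈ T then 0 else QA m (gI m (insert i T)) := by
  classical
  by_cases h : i ∈ T
  · rw [if_pos h]
    have hT : gI m T = gI m (T.erase i) * (X i - 1) := by
      rw [gI, gI, ← Finset.prod_erase_mul _ _ h]
    rw [hT, map_mul, mul_assoc, ← map_mul, ← sq, QA_sq_gen, mul_zero]
  · rw [if_neg h, ← map_mul, gI, gI, Finset.prod_insert h, mul_comm]

/-- The representability predicate: x is an F₂-combination of gI T with |T| ≥ l. -/
def RepG (m l : ℕ) (x : Amb m) : Prop :=
  ∃ c : Finset (Fin m) → ZMod 2, (∀ T, T.card < l → c T = 0) ∧ x = Gmap m c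

lemma RepG.zero (m l : ℕ) : RepG m l 0 :=
  ⟨0, fun _ _ => rfl, by simp [Gmap]⟩

lemma RepG.add {m l : ℕ} {x y : Amb m} (hx : RepG m l x) (hy : RepG m l y) :
    RepG m l (x + y) := by
  obtain ⟨c, hc, rfl⟩ := hx
  obtain ⟨d, hd, rfl⟩ := hy
  exact ⟨c + d, fun T hT => by simp [hc T hT, hd T hT],
    by
      simp only [Gmap, ← map_add, ← Finset.sum_add_distrib, Pi.add_apply, add_smul]⟩

lemma RepG.smul {m l : ℕ} {x : Amb m} (a : ZMod 2) (hx : RepG m l x) :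
    RepG m l (a • x) := by
  obtain ⟨c, hc, rfl⟩ := hx
  exact ⟨a • c, fun T hT => by simp [hc T hT],
    by simp [Gmap, ← map_smul, Finset.smul_sum, smul_smul]⟩

lemma RepG.mono {m l l' : ℕ} (h : l' ≤ l) {x : Amb m} (hx : RepG m l x) : RepG m l' x := by
  obtain ⟨c, hc, rfl⟩ := hx
  exact ⟨c, fun T hT => hc T (lt_of_lt_of_le hT h), rfl⟩

lemma RepG.mul_gen {m l : ℕ} {x : Amb m} (hx : RepG m l x) (i : Fin m) :
    RepG m (l + 1) (x * QA m (X i - 1)) := by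
  classical
  obtain ⟨c, hc, rfl⟩ := hx
  refine ⟨fun T => if i ∈ T then c (T.erase i) else 0, fun T hT => ?_, ?_⟩
  · show (if i ∈ T then c (T.erase i) else 0) = 0
    by_cases h : i ∈ T
    · rw [if_pos h]
      apply hc
      have := Finset.card_erase_of_mem h
      have h1 : 1 ≤ T.card := Finset.card_pos.2 ⟨i, h⟩
      omega
    · rw [if_neg h]
  · unfold Gmap
    rw [map_sum, map_sum, Finset.sum_mul]
    have lhs : ∀ T : Finset (Fin m),
        QA m (c T • gI m T) * QA m (X i - 1)
          = if i ∈ T then 0 else c T • QA m (gI m (insert i T)) := by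
      intro T
      rw [map_smul, smul_mul_assoc, gI_mul_gen]
      split <;> simp
    simp only [lhs]
    rw [Finset.sum_ite, Finset.sum_const_zero, zero_add]
    -- RHS: ∑ T, (if i ∈ T then c (T.erase i) else 0) • QA (gI T)
    have rhs : ∀ T : Finset (Fin m),
        QA m ((if i ∈ T then c (T.erase i) else 0) • gI m T)
          = if i ∈ T then c (T.erase i) • QA m (gI m T) else 0 := by
      intro T
      split <;> simp [map_smul]
    rw [show (∑ T : Finset (Fin m), QA m ((if i ∈ T then c (T.erase i) else 0) • gI m T))
        = ∑ T ∈ Finset.univ.filter (fun T => i ∈ T), c (T.erase i) • QA m (gI m T) by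
      simp only [rhs]; rw [Finset.sum_ite, Finset.sum_const_zero, add_zero]]
    refine Finset.sum_bij' (fun T _ => insert i T) (fun T _ => T.erase i) ?_ ?_ ?_ ?_ ?_
    · intro T hT
      simp only [Finset.mem_filter, Finset.mem_univ, true_and] at hT ⊢
      exact Finset.mem_insert_self i T
    · intro T hT
      simp only [Finset.mem_filter, Finset.mem_univ, true_and] at hT ⊢
      exact Finset.notMem_erase i T
    · intro T hT
      simp only [Finset.mem_filter, Finset.mem_univ, true_and] at hT
      exact Finset.erase_insert hT
    · intro T hT
      simp only [Finset.mem_filter, Finset.mem_univ, true_and] at hT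
      exact Finset.insert_erase hT
    · intro T hT
      simp only [Finset.mem_filter, Finset.mem_univ, true_and] at hT
      rw [Finset.erase_insert hT]

lemma Gmap_single (m : ℕ) (T0 : Finset (Fin m)) :
    Gmap m (fun T => if T = T0 then 1 else 0) = QA m (gI m T0) := by
  unfold Gmap
  congr 1
  rw [Finset.sum_eq_single T0 (fun T _ hT => by simp [hT]) (by simp)]
  simp

lemma RepG.mul_X {m l : ℕ} {x : Amb m} (hx : RepG m l x) (i : Fin m) :
    RepG m l (x * QA m (X i)) := by
  have : x * QA m (X i) = x * QA m (X i - 1) + x := by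
    rw [map_sub, map_one, mul_sub, mul_one]
    ring
  rw [this]
  exact ((hx.mul_gen i).mono (Nat.le_succ l)).add hx

lemma RepG.mul_poly {m l : ℕ} (P : MvPolynomial (Fin m) (ZMod 2)) :
    ∀ x : Amb m, RepG m l x → RepG m l (QA m P * x) := by
  induction P using MvPolynomial.induction_on with
  | C a =>
    intro x hx
    have : QA m (C a) * x = a • x := by
      rw [show (C a : MvPolynomial (Fin m) (ZMod 2)) = algebraMap (ZMod 2) _ a from rfl,
        AlgHom.commutes, ← Algebra.smul_def]
    rw [this]
    exact hx.smul a
  | add P Q hP hQ =>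
    intro x hx
    rw [map_add, add_mul]
    exact (hP x hx).add (hQ x hx)
  | mul_X P i hP =>
    intro x hx
    rw [map_mul, mul_assoc, mul_comm (QA m (X i)) x]
    exact hP _ (hx.mul_X i)

lemma RepG.mul_left {m l : ℕ} {x : Amb m} (hx : RepG m l x) (r : Amb m) :
    RepG m l (r * x) := by
  obtain ⟨P, rfl⟩ := Ideal.Quotient.mkₐ_surjective (ZMod 2) (relIdeal m) r
  exact RepG.mul_poly P x hx

lemma RepG.one (m : ℕ) : RepG m 0 1 :=
  ⟨fun T => if T = ∅ then 1 else 0, fun _ h => absurd h (by omega), by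
    rw [Gmap_single]
    simp [gI]⟩

lemma RepG.top (m : ℕ) (x : Amb m) : RepG m 0 x := by
  rw [← mul_one x]
  exact (RepG.one m).mul_left x

lemma pow_mem_repG (m l : ℕ) {x : Amb m} (hx : x ∈ Mideal m ^ l) : RepG m l x := by
  induction l generalizing x with
  | zero => exact RepG.top m x
  | succ l ih =>
    rw [Submodule.pow_succ] at hx
    refine Submodule.mul_induction_on hx (fun a ha b hb => ?_) (fun x y hx hy => hx.add hy)
    have hra : RepG m l a := ih ha
    refine Submodule.span_induction ?_ ?_ ?_ ?_ hb
    · rintro b ⟨i, rfl⟩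
      exact hra.mul_gen i
    · rw [mul_zero]; exact RepG.zero m (l+1)
    · intro y z _ _ hy hz
      rw [mul_add]
      exact hy.add hz
    · intro r y _ hy
      rw [smul_eq_mul, ← mul_assoc, mul_comm a r, mul_assoc]
      exact hy.mul_left r

lemma Gmap_mem_pow (m l : ℕ) (c : Finset (Fin m) → ZMod 2)
    (hc : ∀ T, T.card < l → c T = 0) : Gmap m c ∈ Mideal m ^ l := by
  unfold Gmap
  rw [map_sum]
  refine Ideal.sum_mem _ fun T _ => ?_
  by_cases h : T.card < l
  · rw [hc T h, zero_smul, map_zero]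
    exact zero_mem _
  · rw [map_smul]
    refine Submodule.smul_of_tower_mem _ _ ?_
    exact Ideal.pow_le_pow_right (le_of_not_gt h) (QA_gI_mem_pow m T)

theorem mem_pow_iff (m l : ℕ) (w : Finset (Fin m) → ZMod 2) :
    toA m w ∈ Mideal m ^ l ↔ ∀ T : Finset (Fin m), T.card < l → Dop m w T = 0 := by
  constructor
  · intro hx
    obtain ⟨c, hc, heq⟩ := pow_mem_repG m l hx
    have : w = Dop m c := toA_injective m (by rw [heq, Gmap_eq_toA])
    intro T hT
    rw [this, Dop_Dop]
    exact hc T hT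
  · intro h
    rw [toA_eq_Gmap]
    exact Gmap_mem_pow m l _ h

-- ### downward transform
noncomputable def Eop (m : ℕ) (w : Finset (Fin m) → ZMod 2) : Finset (Fin m) → ZMod 2 :=
  fun S => ∑ U ∈ S.powerset, w U

lemma powerset_eq_filter {m : ℕ} (S : Finset (Fin m)) :
    S.powerset = Finset.univ.filter (fun U => U ⊆ S) := by
  ext U; simp

lemma Eop_Eop {m : ℕ} (w : Finset (Fin m) → ZMod 2) : Eop m (Eop m w) = w := by
  funext S
  simp only [Eop]
  calc ∑ S' ∈ S.powerset, ∑ U ∈ S'.powerset, w U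
      = ∑ S' : Finset (Fin m), ∑ U : Finset (Fin m),
          (if U ⊆ S' ∧ S' ⊆ S then (1 : ZMod 2) else 0) * w U := by
        rw [powerset_eq_filter, Finset.sum_filter]
        refine Finset.sum_congr rfl fun S' _ => ?_
        by_cases hS' : S' ⊆ S
        · rw [if_pos hS', powerset_eq_filter, Finset.sum_filter]
          refine Finset.sum_congr rfl fun U _ => ?_
          by_cases hU : U ⊆ S' <;> simp [hU, hS']
        · rw [if_neg hS']
          refine (Finset.sum_eq_zero fun U _ => ?_).symm
          simp [hS']
    _ = ∑ U : Finset (Fin m),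
          ((Finset.univ.filter (fun S' => U ⊆ S' ∧ S' ⊆ S)).card : ZMod 2) * w U := by
        rw [Finset.sum_comm]
        refine Finset.sum_congr rfl fun U _ => ?_
        rw [← Finset.sum_mul]
        congr 1
        rw [Finset.sum_boole]
    _ = w S := by
        simp only [count_between_zmod]
        rw [Finset.sum_eq_single S (fun U _ hU => by simp [Ne.symm hU]) (by simp)]
        simp

-- product of indicator values
lemma prod_ind {m : ℕ} (R S : Finset (Fin m)) :
    (∏ i ∈ R, (if i ∈ S then (1 : ZMod 2) else 0)) = if R ⊆ S then 1 else 0 := by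
  by_cases h : R ⊆ S
  · rw [if_pos h]
    exact Finset.prod_eq_one fun i hi => by rw [if_pos (h hi)]
  · rw [if_neg h]
    obtain ⟨i, hiR, hiS⟩ := Finset.not_subset.1 h
    exact Finset.prod_eq_zero hiR (by rw [if_neg hiS])

lemma filter_superset_inter {m : ℕ} (T R : Finset (Fin m)) :
    Finset.univ.filter (fun S => T ⊆ S ∧ R ⊆ S)
      = Finset.univ.filter (fun S => T ∪ R ⊆ S) := by
  ext S; simp [Finset.union_subset_iff]

lemma rm_to_cond (m l : ℕ) (hl : l ≤ m) (w : Finset (Fin m) → ZMod 2)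
    (hw : w ∈ RM m (m - l)) :
    ∀ T : Finset (Fin m), T.card < l → Dop m w T = 0 := by
  classical
  obtain ⟨P, hdeg, hsf, heval⟩ := hw
  intro T hT
  -- evaluate: for each S, w S = ∑ over support
  have hev : ∀ S : Finset (Fin m),
      w S = ∑ α ∈ P.support, P.coeff α * (if α.support ⊆ S then 1 else 0) := by
    intro S
    rw [heval S, eval_eq]
    refine Finset.sum_congr rfl fun α hα => ?_
    congr 1
    rw [← prod_ind α.support S]
    refine Finset.prod_congr rfl fun i hi => ?_
    have h1 : α i = 1 := by
      have := hsf α hα i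
      have h0 : α i ≠ 0 := Finsupp.mem_support_iff.1 hi
      omega
    rw [h1, pow_one]
  unfold Dop
  calc ∑ S ∈ Finset.univ.filter (fun S => T ⊆ S), w S
      = ∑ S ∈ Finset.univ.filter (fun S => T ⊆ S), ∑ α ∈ P.support,
          P.coeff α * (if α.support ⊆ S then 1 else 0) :=
        Finset.sum_congr rfl fun S _ => hev S
    _ = ∑ α ∈ P.support, P.coeff α *
          ((Finset.univ.filter (fun S => T ∪ α.support ⊆ S)).card : ZMod 2) := by
        rw [Finset.sum_comm]
        refine Finset.sum_congr rfl fun α _ => ?_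
        rw [← filter_superset_inter, ← Finset.mul_sum]
        congr 1
        rw [Finset.sum_filter, ← Finset.sum_boole (p := fun S => T ⊆ S ∧ α.support ⊆ S)]
        refine Finset.sum_congr rfl fun S _ => ?_
        by_cases h1 : T ⊆ S <;> by_cases h2 : α.support ⊆ S <;> simp [h1, h2]
    _ = 0 := by
        refine Finset.sum_eq_zero fun α hα => ?_
        rw [count_superset_zmod]
        have hcard : (T ∪ α.support).card < m := by
          have h1 : α.support.card ≤ (α.sum fun _ e => e) := by
            rw [Finsupp.sum]
            calc α.support.card = ∑ _i ∈ α.support, 1 := by simp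
              _ ≤ ∑ i ∈ α.support, α i := Finset.sum_le_sum fun i hi =>
                  Nat.one_le_iff_ne_zero.2 (Finsupp.mem_support_iff.1 hi)
          have h2 : (α.sum fun _ e => e) ≤ m - l := le_trans (le_totalDegree hα) hdeg
          have h3 := Finset.card_union_le T α.support
          omega
        have : T ∪ α.support ≠ Finset.univ := by
          intro h
          rw [h, Finset.card_univ, Fintype.card_fin] at hcard
          omega
        rw [if_neg this, mul_zero]

noncomputable def indF {m : ℕ} (S : Finset (Fin m)) : Fin m →₀ ℕ :=
  ∑ i ∈ S, Finsupp.single i 1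

lemma indF_apply {m : ℕ} (S : Finset (Fin m)) (i : Fin m) :
    indF S i = if i ∈ S then 1 else 0 := by
  classical
  unfold indF
  rw [Finset.sum_apply']
  by_cases h : i ∈ S
  · rw [if_pos h, Finset.sum_eq_single i (fun j _ hj => Finsupp.single_eq_of_ne' hj)
      (fun hh => absurd h hh)]
    simp
  · rw [if_neg h]
    exact Finset.sum_eq_zero fun j hj =>
      Finsupp.single_eq_of_ne' (fun hh => h (hh ▸ hj))

lemma indF_support {m : ℕ} (S : Finset (Fin m)) : (indF S).support = S := by
  ext i
  rw [Finsupp.mem_support_iff, indF_apply]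
  by_cases h : i ∈ S <;> simp [h]

lemma indF_sum {m : ℕ} (S : Finset (Fin m)) :
    ((indF S).sum fun _ e => e) = S.card := by
  rw [Finsupp.sum, indF_support]
  calc ∑ i ∈ S, indF S i = ∑ i ∈ S, 1 := Finset.sum_congr rfl fun i hi => by
        rw [indF_apply, if_pos hi]
    _ = S.card := by simp

lemma eS_zero (m l : ℕ) (hl : l ≤ m) (w : Finset (Fin m) → ZMod 2)
    (hcond : ∀ T : Finset (Fin m), T.card < l → Dop m w T = 0)
    (S : Finset (Fin m)) (hS : m - l < S.card) : Eop m w S = 0 := by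
  classical
  have hw : w = Dop m (Dop m w) := (Dop_Dop w).symm
  set d := Dop m w with hd
  calc Eop m w S
      = ∑ U ∈ S.powerset, ∑ T ∈ Finset.univ.filter (fun T => U ⊆ T), d T := by
        unfold Eop
        refine Finset.sum_congr rfl fun U _ => ?_
        conv_lhs => rw [hw]
        rfl
    _ = ∑ U : Finset (Fin m), ∑ T : Finset (Fin m),
          (if U ⊆ S ∧ U ⊆ T then (1 : ZMod 2) else 0) * d T := by
        rw [powerset_eq_filter, Finset.sum_filter]
        refine Finset.sum_congr rfl fun U _ => ?_
        by_cases hU : U ⊆ S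
        · rw [if_pos hU, Finset.sum_filter]
          refine Finset.sum_congr rfl fun T _ => ?_
          by_cases hT : U ⊆ T <;> simp [hU, hT]
        · rw [if_neg hU]
          refine (Finset.sum_eq_zero fun T _ => ?_).symm
          simp [hU]
    _ = ∑ T : Finset (Fin m),
          ((Finset.univ.filter (fun U => U ⊆ S ∧ U ⊆ T)).card : ZMod 2) * d T := by
        rw [Finset.sum_comm]
        refine Finset.sum_congr rfl fun T _ => ?_
        rw [← Finset.sum_mul]
        congr 1
        rw [Finset.sum_boole]
    _ = 0 := by
        refine Finset.sum_eq_zero fun T _ => ?_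
        have hfe : Finset.univ.filter (fun U => U ⊆ S ∧ U ⊆ T) = (S ∩ T).powerset := by
          ext U
          rw [Finset.mem_filter, Finset.mem_powerset, Finset.subset_inter_iff]
          simp
        rw [hfe, Finset.card_powerset, two_pow_zmod]
        by_cases hST : (S ∩ T).card = 0
        · rw [if_pos hST, one_mul]
          apply hcond
          have hTc : T ⊆ Sᶜ := by
            intro i hi
            rw [Finset.mem_compl]
            intro hiS
            have : i ∈ S ∩ T := Finset.mem_inter.2 ⟨hiS, hi⟩
            rw [Finset.card_eq_zero] at hST
            rw [hST] at this
            exact absurd this (Finset.notMem_empty i)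
          have := Finset.card_le_card hTc
          rw [Finset.card_compl, Fintype.card_fin] at this
          have hSm : S.card ≤ m := by
            have := Finset.card_le_card (Finset.subset_univ S)
            rwa [Finset.card_univ, Fintype.card_fin] at this
          omega
        · rw [if_neg hST, zero_mul]

lemma cond_to_rm (m l : ℕ) (hl : l ≤ m) (w : Finset (Fin m) → ZMod 2)
    (hcond : ∀ T : Finset (Fin m), T.card < l → Dop m w T = 0) :
    w ∈ RM m (m - l) := by
  classical
  set e := Eop m w with he
  refine ⟨∑ S : Finset (Fin m), monomial (indF S) (e S), ?_, ?_, ?_⟩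
  · -- total degree
    rw [totalDegree]
    refine Finset.sup_le fun α hα => ?_
    have := MvPolynomial.support_sum hα
    rw [Finset.mem_biUnion] at this
    obtain ⟨S, _, hαS⟩ := this
    rw [support_monomial] at hαS
    by_cases h0 : e S = 0
    · rw [if_pos h0] at hαS; exact absurd hαS (Finset.notMem_empty α)
    · rw [if_neg h0, Finset.mem_singleton] at hαS
      subst hαS
      rw [indF_sum]
      by_contra hc
      exact h0 (eS_zero m l hl w hcond S (by omega))
  · -- squarefree
    intro α hα i
    have := MvPolynomial.support_sum hα
    rw [Finset.mem_biUnion] at this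
    obtain ⟨S, _, hαS⟩ := this
    rw [support_monomial] at hαS
    by_cases h0 : e S = 0
    · rw [if_pos h0] at hαS; exact absurd hαS (Finset.notMem_empty α)
    · rw [if_neg h0, Finset.mem_singleton] at hαS
      subst hαS
      rw [indF_apply]
      split <;> omega
  · -- evaluation
    intro S₀
    rw [map_sum]
    calc w S₀ = Eop m e S₀ := by rw [he, Eop_Eop]
      _ = ∑ S ∈ S₀.powerset, e S := rfl
      _ = ∑ S : Finset (Fin m), e S * (if S ⊆ S₀ then 1 else 0) := by
          rw [powerset_eq_filter, Finset.sum_filter]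
          refine Finset.sum_congr rfl fun S _ => ?_
          by_cases h : S ⊆ S₀ <;> simp [h]
      _ = ∑ S : Finset (Fin m),
            eval (fun i => if i ∈ S₀ then (1 : ZMod 2) else 0) (monomial (indF S) (e S)) := by
          refine Finset.sum_congr rfl fun S _ => ?_
          rw [eval_monomial]
          congr 1
          rw [Finsupp.prod, indF_support, ← prod_ind S S₀]
          refine Finset.prod_congr rfl fun i hi => ?_
          rw [indF_apply, if_pos hi, pow_one]

/-- Berman: under the coefficient identification of A with F₂^{2^m},
the radical power Mˡ is exactly the Reed–Muller code C_{m-l}(m,2). -/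
theorem stmt5 (m l : ℕ) (hl : l ≤ m) :
    ∀ w : Finset (Fin m) → ZMod 2, toA m w ∈ Mideal m ^ l ↔ w ∈ RM m (m - l) := by
  intro w
  rw [mem_pow_iff]
  exact ⟨fun h => cond_to_rm m l hl w h, fun h => rm_to_cond m l hl w h⟩
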